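/- For all real numbers a < b and every integer n ≥ 1, ∫_{na}^{nb} ∫_{na}^{nb} ∫_{na}^{nb} ∫_{na}^{nb} 1/((|s−t|+1)(|t−t'|+1)(|t'−s'|+1)) ds dt ds' dt' ≤ 8 n (b−a) (log(1 + n(b−a)))³. -/

import Mathlib

set_option autoImplicit false

open MeasureTheory Real Set

private lemma inv_abs_cont : Continuous fun u : ℝ => (|u| + 1)⁻¹ :=
  (continuous_abs.add continuous_const).inv₀ fun u => (by positivity : |u| + 1 ≠ 0)

private lemma anti1 (p q : ℝ) (hpq : p ≤ q) :
    ∫ y in p..q, (q - y + 1)⁻¹ = Real.log (q - p + 1) := by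
  have hderiv : ∀ y ∈ uIcc p q, HasDerivAt (fun y => -Real.log (q - y + 1)) ((q - y + 1)⁻¹) y := by
    intro y hy
    rw [uIcc_of_le hpq] at hy
    have h1 : (0:ℝ) < q - y + 1 := by linarith [hy.2]
    have hu : HasDerivAt (fun y : ℝ => q - y + 1) (-1) y := by
      simpa using ((hasDerivAt_id y).const_sub q).add_const 1
    have hlog := (hu.log (ne_of_gt h1)).neg
    have hlog' : HasDerivAt (fun y => -Real.log (q - y + 1)) (-(-1 / (q - y + 1))) y := hlog
    convert hlog' using 1
    ring
  have hint : IntervalIntegrable (fun y => (q - y + 1)⁻¹) MeasureTheory.volume p q := by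
    apply ContinuousOn.intervalIntegrable
    apply ContinuousOn.inv₀
    · fun_prop
    · intro y hy
      rw [uIcc_of_le hpq] at hy
      have := hy.2
      intro h; linarith
  rw [intervalIntegral.integral_eq_sub_of_hasDerivAt hderiv hint]
  rw [show q - q + 1 = (1:ℝ) by ring, Real.log_one]
  ring

private lemma anti2 (p q : ℝ) (hpq : p ≤ q) :
    ∫ y in p..q, (y - p + 1)⁻¹ = Real.log (q - p + 1) := by
  have hderiv : ∀ y ∈ uIcc p q, HasDerivAt (fun y => Real.log (y - p + 1)) ((y - p + 1)⁻¹) y := by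
    intro y hy
    rw [uIcc_of_le hpq] at hy
    have h1 : (0:ℝ) < y - p + 1 := by linarith [hy.1]
    have hu : HasDerivAt (fun y : ℝ => y - p + 1) 1 y := by
      simpa using ((hasDerivAt_id y).sub_const p).add_const 1
    have hlog := hu.log (ne_of_gt h1)
    convert hlog using 1
    field_simp
  have hint : IntervalIntegrable (fun y => (y - p + 1)⁻¹) MeasureTheory.volume p q := by
    apply ContinuousOn.intervalIntegrable
    apply ContinuousOn.inv₀
    · fun_prop
    · intro y hy
      rw [uIcc_of_le hpq] at hy
      have := hy.1
      intro h; linarith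
  rw [intervalIntegral.integral_eq_sub_of_hasDerivAt hderiv hint]
  rw [show p - p + 1 = (1:ℝ) by ring, Real.log_one]
  ring

private lemma key_int (c d x : ℝ) (hx : x ∈ Icc c d) :
    ∫ y in Icc c d, (|y - x| + 1)⁻¹ ≤ 2 * Real.log (1 + (d - c)) := by
  obtain ⟨hcx, hxd⟩ := hx
  have hcd : c ≤ d := hcx.trans hxd
  have hii : ∀ p q : ℝ, IntervalIntegrable (fun y => (|y - x| + 1)⁻¹) MeasureTheory.volume p q :=
    fun p q => (inv_abs_cont.comp (continuous_id.sub continuous_const)).intervalIntegrable p q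
  rw [MeasureTheory.integral_Icc_eq_integral_Ioc, ← intervalIntegral.integral_of_le hcd,
    ← intervalIntegral.integral_add_adjacent_intervals (hii c x) (hii x d)]
  have e1 : ∫ y in c..x, (|y - x| + 1)⁻¹ = Real.log (x - c + 1) := by
    rw [intervalIntegral.integral_congr (g := fun y => (x - y + 1)⁻¹) ?_]
    · exact anti1 c x hcx
    · intro y hy
      rw [uIcc_of_le hcx] at hy
      simp only
      rw [abs_of_nonpos (by linarith [hy.2] : y - x ≤ 0)]
      ring_nf
  have e2 : ∫ y in x..d, (|y - x| + 1)⁻¹ = Real.log (d - x + 1) := by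
    rw [intervalIntegral.integral_congr (g := fun y => (y - x + 1)⁻¹) ?_]
    · exact anti2 x d hxd
    · intro y hy
      rw [uIcc_of_le hxd] at hy
      simp only
      rw [abs_of_nonneg (by linarith [hy.1] : (0:ℝ) ≤ y - x)]
  rw [e1, e2]
  have b1 : Real.log (x - c + 1) ≤ Real.log (1 + (d - c)) :=
    Real.log_le_log (by linarith) (by linarith)
  have b2 : Real.log (d - x + 1) ≤ Real.log (1 + (d - c)) :=
    Real.log_le_log (by linarith) (by linarith)
  linarith

private lemma key_int' (c d x : ℝ) (hx : x ∈ Icc c d) :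
    ∫ y in Icc c d, (|x - y| + 1)⁻¹ ≤ 2 * Real.log (1 + (d - c)) := by
  simp only [abs_sub_comm x]
  exact key_int c d x hx

private lemma double_bound (c d : ℝ) (t : ℝ) (ht : t ∈ Icc c d) :
    ∫ s' in Icc c d, ∫ t' in Icc c d, (|t - t'| + 1)⁻¹ * (|t' - s'| + 1)⁻¹
      ≤ (2 * Real.log (1 + (d - c)))^2 := by
  have hcd : c ≤ d := ht.1.trans ht.2
  set K := 2 * Real.log (1 + (d - c)) with hK
  have hK0 : 0 ≤ K := by
    have := Real.log_nonneg (by linarith : (1:ℝ) ≤ 1 + (d - c))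
    positivity
  have hswap : Integrable
      (Function.uncurry fun s' t' => (|t - t'| + 1)⁻¹ * (|t' - s'| + 1)⁻¹)
      ((volume.restrict (Icc c d)).prod (volume.restrict (Icc c d))) := by
    rw [Measure.prod_restrict]
    have hc : Continuous fun p : ℝ × ℝ => (|t - p.2| + 1)⁻¹ * (|p.2 - p.1| + 1)⁻¹ :=
      (inv_abs_cont.comp (continuous_const.sub continuous_snd)).mul
        (inv_abs_cont.comp (continuous_snd.sub continuous_fst))
    exact hc.continuousOn.integrableOn_compact (isCompact_Icc.prod isCompact_Icc)
  rw [MeasureTheory.integral_integral_swap hswap]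
  simp only [MeasureTheory.integral_const_mul]
  calc ∫ t' in Icc c d, (|t - t'| + 1)⁻¹ * ∫ s' in Icc c d, (|t' - s'| + 1)⁻¹
      ≤ ∫ t' in Icc c d, (|t - t'| + 1)⁻¹ * K := by
        apply integral_mono_of_nonneg
        · exact Filter.Eventually.of_forall fun t' =>
            mul_nonneg (by positivity) (integral_nonneg fun s' => by positivity)
        · exact ((inv_abs_cont.comp (continuous_const.sub continuous_id)).mul
            continuous_const).integrableOn_Icc
        · filter_upwards [ae_restrict_mem measurableSet_Icc] with t' ht'
          exact mul_le_mul_of_nonneg_left (key_int' c d t' ht') (by positivity)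
    _ = (∫ t' in Icc c d, (|t - t'| + 1)⁻¹) * K := MeasureTheory.integral_mul_const _ _
    _ ≤ K * K := mul_le_mul_of_nonneg_right (key_int' c d t ht) hK0
    _ = K ^ 2 := (sq K).symm

private lemma triple_bound (c d : ℝ) (s : ℝ) (hs : s ∈ Icc c d) :
    ∫ t in Icc c d, (|s - t| + 1)⁻¹ *
        ∫ s' in Icc c d, ∫ t' in Icc c d, (|t - t'| + 1)⁻¹ * (|t' - s'| + 1)⁻¹
      ≤ (2 * Real.log (1 + (d - c)))^3 := by
  set K := 2 * Real.log (1 + (d - c)) with hK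
  have hK0 : 0 ≤ K := by
    have hcd : c ≤ d := hs.1.trans hs.2
    have := Real.log_nonneg (by linarith : (1:ℝ) ≤ 1 + (d - c))
    positivity
  calc ∫ t in Icc c d, (|s - t| + 1)⁻¹ *
        ∫ s' in Icc c d, ∫ t' in Icc c d, (|t - t'| + 1)⁻¹ * (|t' - s'| + 1)⁻¹
      ≤ ∫ t in Icc c d, (|s - t| + 1)⁻¹ * K ^ 2 := by
        apply integral_mono_of_nonneg
        · exact Filter.Eventually.of_forall fun t => mul_nonneg (by positivity)
            (integral_nonneg fun s' => integral_nonneg fun t' => by positivity)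
        · exact ((inv_abs_cont.comp (continuous_const.sub continuous_id)).mul
            continuous_const).integrableOn_Icc
        · filter_upwards [ae_restrict_mem measurableSet_Icc] with t htI
          exact mul_le_mul_of_nonneg_left (double_bound c d t htI) (by positivity)
    _ = (∫ t in Icc c d, (|s - t| + 1)⁻¹) * K ^ 2 := MeasureTheory.integral_mul_const _ _
    _ ≤ K * K ^ 2 := mul_le_mul_of_nonneg_right (key_int' c d s hs) (by positivity)
    _ = K ^ 3 := by ring

theorem quadruple_integral_bound (a b : ℝ) (hab : a < b) (n : ℕ) (hn : 1 ≤ n) :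
    (∫ s in Set.Icc ((n : ℝ) * a) ((n : ℝ) * b),
      ∫ t in Set.Icc ((n : ℝ) * a) ((n : ℝ) * b),
        ∫ s' in Set.Icc ((n : ℝ) * a) ((n : ℝ) * b),
          ∫ t' in Set.Icc ((n : ℝ) * a) ((n : ℝ) * b),
            1 / ((|s - t| + 1) * (|t - t'| + 1) * (|t' - s'| + 1)))
    ≤ 8 * n * (b - a) * (Real.log (1 + n * (b - a))) ^ 3 := by
  have hn1 : (1:ℝ) ≤ (n:ℝ) := by exact_mod_cast hn
  set c : ℝ := (n : ℝ) * a with hc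
  set d : ℝ := (n : ℝ) * b with hd
  have hdc : 0 < d - c := by
    have h0 : (0:ℝ) < (n:ℝ) := by linarith
    have := mul_lt_mul_of_pos_left hab h0
    rw [hc, hd]; linarith
  have hcd : c ≤ d := by linarith
  have hdceq : d - c = (n:ℝ) * (b - a) := by rw [hc, hd]; ring
  set K := 2 * Real.log (1 + (d - c)) with hK
  have hlog0 : 0 ≤ Real.log (1 + (d - c)) := Real.log_nonneg (by linarith)
  have hK0 : 0 ≤ K := by positivity
  simp only [one_div, mul_inv, mul_assoc, MeasureTheory.integral_const_mul]
  calc (∫ s in Icc c d, ∫ t in Icc c d, (|s - t| + 1)⁻¹ *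
          ∫ s' in Icc c d, ∫ t' in Icc c d, (|t - t'| + 1)⁻¹ * (|t' - s'| + 1)⁻¹)
      ≤ ∫ _s in Icc c d, K ^ 3 := by
        apply integral_mono_of_nonneg
        · exact Filter.Eventually.of_forall fun s => integral_nonneg fun t =>
            mul_nonneg (by positivity)
              (integral_nonneg fun s' => integral_nonneg fun t' => by positivity)
        · exact MeasureTheory.integrableOn_const (by
            rw [Real.volume_Icc]; exact ENNReal.ofReal_ne_top)
        · filter_upwards [ae_restrict_mem measurableSet_Icc] with s hs
          exact triple_bound c d s hs
    _ = (d - c) * K ^ 3 := by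
        rw [MeasureTheory.setIntegral_const, measureReal_def, Real.volume_Icc, smul_eq_mul,
          ENNReal.toReal_ofReal hdc.le]
    _ = 8 * (↑n * ((b - a) * Real.log (1 + ↑n * (b - a)) ^ 3)) := by
        rw [hK, hdceq]; ring
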